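/- Let C ⊆ F_2^8 be an extended perfect binary code of length 8 (so |C| = 16), and let i ≠ j be two coordinates. Then every ij-component of C has cardinality 8; i.e., C splits into exactly two ij-components, each of maximal cardinality |C|/2. -/

import Mathlib

/-- `ij`-adjacency in a code `C` of length 8: both codewords in `C`, at Hamming
distance 4, differing in both coordinates `i` and `j`. -/
def adjC (C : Set (Fin 8 → ZMod 2)) (i j : Fin 8) (a b : Fin 8 → ZMod 2) : Prop :=
  a ∈ C ∧ b ∈ C ∧ hammingDist a b = 4 ∧ a i ≠ b i ∧ a j ≠ b j

open Finset

abbrev V := Fin 8 → ZMod 2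
def sf (x : V) : Finset (Fin 8) := Finset.univ.filter (fun k => x k ≠ 0)
def oneV : V := fun _ => 1
lemma norm_eq (x : V) : hammingNorm x = (sf x).card := rfl

lemma dist_card (x y : V) :
    hammingDist x y + 2 * (sf x ∩ sf y).card = hammingNorm x + hammingNorm y := by
  have hfe : Finset.univ.filter (fun k => x k ≠ y k)
      = (sf x ∪ sf y) \ (sf x ∩ sf y) := by
    ext k
    simp only [sf, Finset.mem_filter, Finset.mem_sdiff, Finset.mem_union,
      Finset.mem_inter, Finset.mem_univ, true_and]
    exact (by decide : ∀ a b : ZMod 2, (a ≠ b) ↔ ((a ≠ 0 ∨ b ≠ 0) ∧ ¬((a ≠ 0) ∧ (b ≠ 0)))) (x k) (y k)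
  have h2 : (sf x ∩ sf y) ⊆ (sf x ∪ sf y) := Finset.inter_subset_left.trans Finset.subset_union_left
  have h3 := Finset.card_sdiff_of_subset h2
  have h4 := Finset.card_union_add_card_inter (sf x) (sf y)
  have h5 : (sf x ∩ sf y).card ≤ (sf x ∪ sf y).card := Finset.card_le_card h2
  rw [norm_eq, norm_eq, show hammingDist x y = (Finset.univ.filter (fun k => x k ≠ y k)).card from rfl, hfe]
  omega

lemma arith46 : ∀ n : ℕ, n % 2 = 0 → 4 ≤ n → n ≤ 6 → n = 4 ∨ n = 6 := by
  intro n h1 h2 h3; omega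

lemma arith48 : ∀ n : ℕ, n % 2 = 0 → 4 ≤ n → n ≤ 8 → n ≠ 6 → n = 4 ∨ n = 8 := by
  intro n h1 h2 h3 h4; omega

lemma plotkin (K : Finset V) (p q : Fin 8) (hpq : p ≠ q)
    (hag : ∀ x ∈ K, ∀ y ∈ K, x p = y p ∧ x q = y q)
    (hd : ∀ x ∈ K, ∀ y ∈ K, x ≠ y → 4 ≤ hammingDist x y) :
    K.card ≤ 4 := by
  by_contra hM
  push_neg at hM
  obtain ⟨M, hMdef⟩ : ∃ M, K.card = M := ⟨_, rfl⟩
  rw [hMdef] at hM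
  have hsum : ∑ k : Fin 8, (if k = p ∨ k = q then 0 else M * M) = 6 * (M * M) := by
    rw [Finset.sum_ite, Finset.sum_const, Finset.sum_const, smul_eq_mul, smul_eq_mul]
    have h1 : Finset.univ.filter (fun k : Fin 8 => k = p ∨ k = q) = {p, q} := by
      ext k; simp
    have h2 : ({p, q} : Finset (Fin 8)).card = 2 := by
      rw [Finset.card_insert_of_notMem (by simp [hpq]), Finset.card_singleton]
    have h3 := Finset.card_filter_add_card_filter_not
      (s := (Finset.univ : Finset (Fin 8))) (fun k => k = p ∨ k = q)
    rw [h1] at h3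
    simp only [Finset.card_univ, Fintype.card_fin] at h3
    rw [h2] at h3
    have h4 : (Finset.univ.filter (fun k : Fin 8 => ¬(k = p ∨ k = q))).card = 6 := by omega
    rw [h4]
    omega
  obtain ⟨T, hTdef⟩ : ∃ T, ∑ x ∈ K, ∑ y ∈ K, hammingDist x y = T := ⟨_, rfl⟩
  have hlow : ∀ x ∈ K, 4 * (M - 1) ≤ ∑ y ∈ K, hammingDist x y := by
    intro x hx
    have h1 : ∑ _y ∈ K.erase x, 4 ≤ ∑ y ∈ K.erase x, hammingDist x y :=
      Finset.sum_le_sum (fun y hy =>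
        hd x hx y (Finset.mem_of_mem_erase hy) (Ne.symm (Finset.ne_of_mem_erase hy)))
    have h2 : ∑ y ∈ K.erase x, hammingDist x y ≤ ∑ y ∈ K, hammingDist x y :=
      Finset.sum_le_sum_of_subset (Finset.erase_subset x K)
    have h3 : ∑ _y ∈ K.erase x, (4:ℕ) = (M-1) * 4 := by
      rw [Finset.sum_const, Finset.card_erase_of_mem hx, smul_eq_mul, hMdef]
    omega
  have hlowT : M * (4 * (M - 1)) ≤ T := by
    have h := Finset.sum_le_sum hlow
    rw [Finset.sum_const, smul_eq_mul, hMdef, hTdef] at h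
    exact h
  have hdist_sum : ∀ x y : V, hammingDist x y = ∑ k : Fin 8, (if x k ≠ y k then 1 else 0) := by
    intro x y
    rw [show hammingDist x y = (Finset.univ.filter (fun k => x k ≠ y k)).card from rfl,
      Finset.card_filter]
  have hT : T = ∑ k : Fin 8, ∑ x ∈ K, ∑ y ∈ K, (if x k ≠ y k then 1 else 0) := by
    rw [← hTdef]
    calc ∑ x ∈ K, ∑ y ∈ K, hammingDist x y
        = ∑ x ∈ K, ∑ y ∈ K, ∑ k : Fin 8, (if x k ≠ y k then 1 else 0) :=
          Finset.sum_congr rfl (fun x _ => Finset.sum_congr rfl (fun y _ => hdist_sum x y))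
    _ = ∑ x ∈ K, ∑ k : Fin 8, ∑ y ∈ K, (if x k ≠ y k then 1 else 0) :=
          Finset.sum_congr rfl (fun x _ => Finset.sum_comm)
    _ = ∑ k : Fin 8, ∑ x ∈ K, ∑ y ∈ K, (if x k ≠ y k then 1 else 0) := Finset.sum_comm
  have hk : ∀ k : Fin 8,
      2 * (∑ x ∈ K, ∑ y ∈ K, (if x k ≠ y k then 1 else 0))
        ≤ if k = p ∨ k = q then 0 else M * M := by
    intro k
    by_cases hkpq : k = p ∨ k = q
    · have heqk : ∀ x ∈ K, ∀ y ∈ K, x k = y k := by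
        intro x hx y hy
        rcases hkpq with rfl | rfl
        exacts [(hag x hx y hy).1, (hag x hx y hy).2]
      have hz : ∑ x ∈ K, ∑ y ∈ K, (if x k ≠ y k then 1 else 0) = 0 :=
        Finset.sum_eq_zero (fun x hx => Finset.sum_eq_zero (fun y hy => by
          simp [heqk x hx y hy]))
      rw [if_pos hkpq, hz]
    · obtain ⟨a, hadef⟩ : ∃ a, (K.filter (fun x => x k = 0)).card = a := ⟨_, rfl⟩
      obtain ⟨b, hbdef⟩ : ∃ b, (K.filter (fun x => ¬ x k = 0)).card = b := ⟨_, rfl⟩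
      have hab : a + b = M := by
        rw [← hadef, ← hbdef, ← hMdef]
        exact Finset.card_filter_add_card_filter_not _
      have hinner : ∀ x ∈ K,
          (∑ y ∈ K, (if x k ≠ y k then 1 else 0)) = if x k = 0 then b else a := by
        intro x hx
        have hcf : (∑ y ∈ K, (if x k ≠ y k then 1 else 0))
            = (K.filter (fun y => x k ≠ y k)).card := (Finset.card_filter _ _).symm
        by_cases hx0 : x k = 0
        · have heq : K.filter (fun y => x k ≠ y k) = K.filter (fun y => ¬ y k = 0) := by
            apply Finset.filter_congr
            intro y _
            rw [hx0]
            exact ⟨fun h => fun h2 => h h2.symm, fun h => fun h2 => h h2.symm⟩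
          rw [hcf, heq, if_pos hx0, hbdef]
        · have hx1 : x k = 1 :=
            (by decide : ∀ a : ZMod 2, a ≠ 0 → a = 1) _ hx0
          have heq : K.filter (fun y => x k ≠ y k) = K.filter (fun y => y k = 0) := by
            apply Finset.filter_congr
            intro y _
            rw [hx1]
            exact ⟨fun h => (by decide : ∀ a : ZMod 2, (1:ZMod 2) ≠ a → a = 0) _ h,
              fun h => by rw [h]; decide⟩
          rw [hcf, heq, if_neg hx0, hadef]
      have hsplit : ∑ x ∈ K, (if x k = 0 then b else a) = a * b + b * a := by
        rw [Finset.sum_ite, Finset.sum_const, Finset.sum_const, smul_eq_mul, smul_eq_mul,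
          hadef, hbdef]
      have htot : ∑ x ∈ K, ∑ y ∈ K, (if x k ≠ y k then 1 else 0) = a * b + b * a := by
        rw [Finset.sum_congr rfl hinner, hsplit]
      rw [if_neg hkpq, htot]
      have key : 2 * (a * b + b * a) ≤ (a + b) * (a + b) := by
        have h := sq_nonneg ((a:ℤ) - b)
        have h2 : (2:ℤ) * (a*b + b*a) ≤ ((a:ℤ)+b)*((a:ℤ)+b) := by nlinarith
        exact_mod_cast h2
      rw [hab] at key
      exact key
  have h2T : 2 * T ≤ 6 * (M * M) := by
    calc 2 * T = ∑ k : Fin 8, 2 * (∑ x ∈ K, ∑ y ∈ K, (if x k ≠ y k then 1 else 0)) := by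
          rw [hT, Finset.mul_sum]
    _ ≤ ∑ k : Fin 8, (if k = p ∨ k = q then 0 else M * M) := Finset.sum_le_sum (fun k _ => hk k)
    _ = 6 * (M * M) := hsum
  clear hT hTdef hdist_sum hk hsum hlow
  have hfin : 2 * (M * (4 * (M - 1))) ≤ 6 * (M * M) :=
    le_trans (Nat.mul_le_mul_left 2 hlowT) h2T
  obtain ⟨m, rfl⟩ : ∃ m, M = m + 5 := ⟨M - 5, by omega⟩
  have h5 : (m + 5) - 1 = m + 4 := by omega
  rw [h5] at hfin
  nlinarith

lemma zsplit (s : Finset V) (p' : Fin 8) :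
    (s.filter (fun v => v p' = 0)).card + (s.filter (fun v => v p' = 1)).card = s.card := by
  have h := Finset.card_filter_add_card_filter_not (s := s) (fun v => v p' = 0)
  have heq : s.filter (fun v => ¬ v p' = 0) = s.filter (fun v => v p' = 1) :=
    Finset.filter_congr (fun v _ =>
      ⟨fun h2 => (by decide : ∀ x : ZMod 2, ¬ x = 0 → x = 1) _ h2,
       fun h2 => by rw [h2]; decide⟩)
  rw [heq] at h
  linarith

lemma class4F (CF : Finset V) (hcard : CF.card = 16)
    (hd : ∀ x ∈ CF, ∀ y ∈ CF, x ≠ y → 4 ≤ hammingDist x y)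
    (p q : Fin 8) (hpq : p ≠ q) (a b : ZMod 2) :
    (CF.filter (fun v => v p = a ∧ v q = b)).card = 4 := by
  have hle : ∀ a' b' : ZMod 2, (CF.filter (fun v => v p = a' ∧ v q = b')).card ≤ 4 := by
    intro a' b'
    apply plotkin _ p q hpq
    · intro x hx y hy
      simp only [Finset.mem_filter] at hx hy
      exact ⟨hx.2.1.trans hy.2.1.symm, hx.2.2.trans hy.2.2.symm⟩
    · intro x hx y hy hxy
      exact hd x (Finset.mem_filter.mp hx).1 y (Finset.mem_filter.mp hy).1 hxy
  have hsplit2 : ∀ a' : ZMod 2,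
      ((CF.filter (fun v => v p = a')).filter (fun v => v q = 0)).card
      + ((CF.filter (fun v => v p = a')).filter (fun v => v q = 1)).card
      = (CF.filter (fun v => v p = a')).card := fun a' => zsplit _ q
  have hff : ∀ a' b' : ZMod 2, (CF.filter (fun v => v p = a')).filter (fun v => v q = b')
      = CF.filter (fun v => v p = a' ∧ v q = b') := fun a' b' => Finset.filter_filter _ _ _
  have h0 := hsplit2 0
  have h1 := hsplit2 1
  rw [hff, hff] at h0
  rw [hff, hff] at h1
  have htop := zsplit CF p
  have l00 := hle 0 0
  have l01 := hle 0 1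
  have l10 := hle 1 0
  have l11 := hle 1 1
  rcases (by decide : ∀ x : ZMod 2, x = 0 ∨ x = 1) a with rfl | rfl <;>
    rcases (by decide : ∀ x : ZMod 2, x = 0 ∨ x = 1) b with rfl | rfl <;>
    linarith

lemma noW6 (CF : Finset V) (hcard : CF.card = 16) (h0 : (0:V) ∈ CF)
    (heven : ∀ u ∈ CF, hammingNorm u % 2 = 0)
    (hd : ∀ x ∈ CF, ∀ y ∈ CF, x ≠ y → 4 ≤ hammingDist x y)
    (u : V) (hu : u ∈ CF) : hammingNorm u ≠ 6 := by
  intro h6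
  -- the zero set of u has two elements p ≠ q
  have hz : (Finset.univ.filter (fun k => u k = 0)).card = 2 := by
    have h := Finset.card_filter_add_card_filter_not
      (s := (Finset.univ : Finset (Fin 8))) (fun k => u k = 0)
    have heq : Finset.univ.filter (fun k => ¬ u k = 0) = sf u :=
      Finset.filter_congr (fun k _ => Iff.rfl)
    rw [heq] at h
    rw [← norm_eq, h6] at h
    simp only [Finset.card_univ, Fintype.card_fin] at h
    linarith
  obtain ⟨p, q, hpq, hset⟩ := Finset.card_eq_two.mp hz
  have huzero : ∀ k : Fin 8, u k = 0 ↔ (k = p ∨ k = q) := by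
    intro k
    have h1 : (k ∈ Finset.univ.filter (fun k => u k = 0)) ↔ u k = 0 := by simp
    rw [← h1, hset, Finset.mem_insert, Finset.mem_singleton]
  have hK := class4F CF hcard hd p q hpq 0 0
  have h0K : (0:V) ∈ CF.filter (fun v => v p = 0 ∧ v q = 0) := by
    simp [h0]
  have huK : u ∈ CF.filter (fun v => v p = 0 ∧ v q = 0) := by
    simp only [Finset.mem_filter]
    exact ⟨hu, (huzero p).mpr (Or.inl rfl), (huzero q).mpr (Or.inr rfl)⟩
  -- find v in the class distinct from 0 and u
  have hex : ∃ v ∈ CF.filter (fun v => v p = 0 ∧ v q = 0), v ≠ 0 ∧ v ≠ u := by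
    by_contra hc
    push_neg at hc
    have hsub : CF.filter (fun v => v p = 0 ∧ v q = 0) ⊆ {0, u} := by
      intro v hv
      rcases Classical.em (v = 0) with rfl | hv0
      · simp
      · rw [hc v hv hv0]; simp
    have h1 := Finset.card_le_card hsub
    rw [hK] at h1
    have h2 : ({0, u} : Finset V).card ≤ 2 :=
      (Finset.card_insert_le _ _).trans (by simp)
    linarith
  obtain ⟨v, hvK, hv0, hvu⟩ := hex
  have hvC : v ∈ CF := (Finset.mem_filter.mp hvK).1
  have hvp : v p = 0 := (Finset.mem_filter.mp hvK).2.1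
  have hvq : v q = 0 := (Finset.mem_filter.mp hvK).2.2
  -- support of v inside support of u
  have hsub : sf v ⊆ sf u := by
    intro k hk
    simp only [sf, Finset.mem_filter, Finset.mem_univ, true_and] at hk ⊢
    intro hk0
    rcases (huzero k).mp hk0 with rfl | rfl
    · exact hk hvp
    · exact hk hvq
  have hnv4 : 4 ≤ hammingNorm v := by
    have := hd v hvC 0 h0 hv0
    rwa [hammingDist_zero_right] at this
  have hnv6 : hammingNorm v ≤ 6 := by
    rw [norm_eq]
    calc (sf v).card ≤ (sf u).card := Finset.card_le_card hsub
    _ = 6 := by rw [← norm_eq, h6]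
  have hev := heven v hvC
  have h46 : hammingNorm v = 4 ∨ hammingNorm v = 6 := arith46 _ hev hnv4 hnv6
  rcases h46 with h4 | hv6
  · -- distance u v = 2, contradiction
    have hdc := dist_card u v
    have hint : sf u ∩ sf v = sf v := Finset.inter_eq_right.mpr hsub
    rw [hint, ← norm_eq, h4, h6] at hdc
    have := hd u hu v hvC (fun h => hvu h.symm)
    linarith
  · -- v = u
    have hcardeq : (sf u).card ≤ (sf v).card := by
      rw [← norm_eq, ← norm_eq, h6, hv6]
    have hseteq : sf v = sf u := Finset.eq_of_subset_of_card_le hsub hcardeq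
    apply hvu
    funext k
    have : (v k ≠ 0) ↔ (u k ≠ 0) := by
      constructor
      · intro h; have : k ∈ sf u := hseteq ▸ (by simp [sf, h]); simpa [sf] using this
      · intro h; have : k ∈ sf v := hseteq.symm ▸ (by simp [sf, h]); simpa [sf] using this
    exact (by decide : ∀ x y : ZMod 2, ((x ≠ 0) ↔ (y ≠ 0)) → x = y) _ _ this

lemma main0 (C : Set V) (h0 : (0:V) ∈ C) (hcard : C.ncard = 16)
    (hpar : ∀ c ∈ C, ∀ c' ∈ C, hammingNorm c % 2 = hammingNorm c' % 2)
    (hdist : ∀ c ∈ C, ∀ c' ∈ C, c ≠ c' → 4 ≤ hammingDist c c')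
    (i j : Fin 8) (hij : i ≠ j) :
    {c' ∈ C | Relation.ReflTransGen (adjC C i j) 0 c'}.ncard = 8 := by
  have hCfin : C.Finite := Set.toFinite C
  set CF := hCfin.toFinset with hCFdef
  have hmem : ∀ v : V, v ∈ CF ↔ v ∈ C := fun v => Set.Finite.mem_toFinset _
  have hCFcard : CF.card = 16 := by
    rw [← Set.ncard_eq_toFinset_card C hCfin, hcard]
  have hdF : ∀ x ∈ CF, ∀ y ∈ CF, x ≠ y → 4 ≤ hammingDist x y := by
    intro x hx y hy
    exact hdist x ((hmem x).mp hx) y ((hmem y).mp hy)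
  have hevenF : ∀ u ∈ CF, hammingNorm u % 2 = 0 := by
    intro u hu
    have h := hpar u ((hmem u).mp hu) 0 h0
    simpa using h
  have h0F : (0:V) ∈ CF := (hmem 0).mpr h0
  -- class cardinalities
  have hAcard : (CF.filter (fun v => v i = 0 ∧ v j = 0)).card = 4 :=
    class4F CF hCFcard hdF i j hij 0 0
  have hBcard : (CF.filter (fun v => v i = 1 ∧ v j = 1)).card = 4 :=
    class4F CF hCFcard hdF i j hij 1 1
  -- norms of nonzero codewords
  have hw48 : ∀ u ∈ CF, u ≠ 0 → hammingNorm u = 4 ∨ hammingNorm u = 8 := by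
    intro u hu hu0
    have h4 : 4 ≤ hammingNorm u := by
      have := hdF u hu 0 h0F hu0
      rwa [hammingDist_zero_right] at this
    have h8 : hammingNorm u ≤ 8 := by
      rw [norm_eq]
      calc (sf u).card ≤ (Finset.univ : Finset (Fin 8)).card :=
            Finset.card_le_card (Finset.subset_univ _)
      _ = 8 := by simp
    exact arith48 _ (hevenF u hu) h4 h8 (noW6 CF hCFcard h0F hevenF hdF u hu)
  have hnorm8 : ∀ u : V, hammingNorm u = 8 → u = oneV := by
    intro u h8
    have hsfu : sf u = Finset.univ := Finset.eq_univ_of_card _ (by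
      rw [← norm_eq, h8]; simp)
    funext k
    have hk : k ∈ sf u := by rw [hsfu]; exact Finset.mem_univ k
    simp only [sf, Finset.mem_filter, Finset.mem_univ, true_and] at hk
    exact (by decide : ∀ a : ZMod 2, a ≠ 0 → a = 1) _ hk
  -- supports of class-(1,1) elements
  have hijcard : ({i, j} : Finset (Fin 8)).card = 2 := by
    rw [Finset.card_insert_of_notMem (by simp [hij]), Finset.card_singleton]
  have hijsub : ∀ b : V, b i = 1 → b j = 1 → ({i, j} : Finset (Fin 8)) ⊆ sf b := by
    intro b hbi hbj k hk
    simp only [Finset.mem_insert, Finset.mem_singleton] at hk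
    simp only [sf, Finset.mem_filter, Finset.mem_univ, true_and]
    rcases hk with rfl | rfl
    · rw [hbi]; decide
    · rw [hbj]; decide
  have hBne0 : ∀ b ∈ CF.filter (fun v => v i = 1 ∧ v j = 1), b ≠ 0 := by
    intro b hb hb0
    have hbi := (Finset.mem_filter.mp hb).2.1
    rw [hb0] at hbi
    exact (by decide : ¬ ((0:ZMod 2) = 1)) hbi
  -- pairwise: supports of two norm-4 elements of class (1,1) intersect exactly in {i,j}
  have hBint : ∀ b ∈ CF.filter (fun v => v i = 1 ∧ v j = 1),
      ∀ b' ∈ CF.filter (fun v => v i = 1 ∧ v j = 1), b ≠ b' →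
      hammingNorm b = 4 → hammingNorm b' = 4 → sf b ∩ sf b' = {i, j} := by
    intro b hb b' hb' hne h4 h4'
    obtain ⟨hbC, hbi, hbj⟩ := Finset.mem_filter.mp hb
    obtain ⟨hbC', hbi', hbj'⟩ := Finset.mem_filter.mp hb'
    have hsub : ({i, j} : Finset (Fin 8)) ⊆ sf b ∩ sf b' :=
      Finset.subset_inter (hijsub b hbi hbj) (hijsub b' hbi' hbj')
    have hdc := dist_card b b'
    rw [h4, h4'] at hdc
    have hd4 := hdF b hbC b' hbC' hne
    have hcle : (sf b ∩ sf b').card ≤ 2 := by linarith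
    have := Finset.eq_of_subset_of_card_le hsub (by rw [hijcard]; exact hcle)
    exact this.symm
  -- the all-ones vector is in the code
  have honeB : oneV ∈ CF.filter (fun v => v i = 1 ∧ v j = 1) := by
    by_contra hno
    have hall4 : ∀ b ∈ CF.filter (fun v => v i = 1 ∧ v j = 1), hammingNorm b = 4 := by
      intro b hb
      rcases hw48 b (Finset.mem_filter.mp hb).1 (hBne0 b hb) with h4 | h8
      · exact h4
      · exact absurd (hnorm8 b h8 ▸ hb) hno
    set B := CF.filter (fun v => v i = 1 ∧ v j = 1) with hBdef
    have hycard : ∀ b ∈ B, (sf b \ {i, j}).card = 2 := by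
      intro b hb
      obtain ⟨hbC, hbi, hbj⟩ := Finset.mem_filter.mp hb
      rw [Finset.card_sdiff_of_subset (hijsub b hbi hbj), ← norm_eq, hall4 b hb, hijcard]
    have hdisj : ∀ b ∈ B, ∀ b' ∈ B, b ≠ b' → Disjoint (sf b \ {i, j}) (sf b' \ {i, j}) := by
      intro b hb b' hb' hne
      rw [Finset.disjoint_left]
      intro k hk hk'
      have h1 := Finset.mem_sdiff.mp hk
      have h2 := Finset.mem_sdiff.mp hk'
      have : k ∈ sf b ∩ sf b' := Finset.mem_inter.mpr ⟨h1.1, h2.1⟩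
      rw [hBint b hb b' hb' hne (hall4 b hb) (hall4 b' hb')] at this
      exact h1.2 this
    have hbu : (B.biUnion (fun b => sf b \ {i, j})).card = 8 := by
      rw [Finset.card_biUnion hdisj]
      rw [Finset.sum_congr rfl hycard, Finset.sum_const, hBcard, smul_eq_mul]
    have hbsub : B.biUnion (fun b => sf b \ {i, j}) ⊆ Finset.univ \ {i, j} := by
      intro k hk
      obtain ⟨b, _, hkb⟩ := Finset.mem_biUnion.mp hk
      have := Finset.mem_sdiff.mp hkb
      exact Finset.mem_sdiff.mpr ⟨Finset.mem_univ k, this.2⟩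
    have hc6 : (Finset.univ \ ({i, j} : Finset (Fin 8))).card = 6 := by
      rw [Finset.card_sdiff_of_subset (Finset.subset_univ _), hijcard]
      simp
    have := Finset.card_le_card hbsub
    rw [hbu, hc6] at this
    linarith
  -- named sets
  set B := CF.filter (fun v => v i = 1 ∧ v j = 1) with hBdef
  set A := CF.filter (fun v => v i = 0 ∧ v j = 0) with hAdef
  have h0A : (0:V) ∈ A := by
    rw [hAdef]
    exact Finset.mem_filter.mpr ⟨h0F, rfl, rfl⟩
  set A' := A.erase 0 with hA'def
  set B4 := B.erase oneV with hB4def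
  have hA'card : A'.card = 3 := by
    rw [hA'def, Finset.card_erase_of_mem h0A, hAcard]
  have hB4card : B4.card = 3 := by
    rw [hB4def, Finset.card_erase_of_mem honeB, hBcard]
  have hA'norm : ∀ a ∈ A', hammingNorm a = 4 := by
    intro a ha
    obtain ⟨hane, haA⟩ := Finset.mem_erase.mp ha
    obtain ⟨haC, hai, haj⟩ := Finset.mem_filter.mp haA
    rcases hw48 a haC hane with h4 | h8
    · exact h4
    · exfalso
      have := hnorm8 a h8
      rw [this] at hai
      exact (by decide : ¬ ((1:ZMod 2) = 0)) hai
  have hB4norm : ∀ b ∈ B4, hammingNorm b = 4 := by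
    intro b hb
    obtain ⟨hbne, hbB⟩ := Finset.mem_erase.mp hb
    rcases hw48 b (Finset.mem_filter.mp hbB).1 (hBne0 b hbB) with h4 | h8
    · exact h4
    · exact absurd (hnorm8 b h8) hbne
  -- adjacency 0 ~ b for b ∈ B4
  have hadj0 : ∀ b ∈ B4, adjC C i j 0 b := by
    intro b hb
    obtain ⟨hbne, hbB⟩ := Finset.mem_erase.mp hb
    obtain ⟨hbC, hbi, hbj⟩ := Finset.mem_filter.mp hbB
    refine ⟨h0, (hmem b).mp hbC, ?_, ?_, ?_⟩
    · rw [hammingDist_comm, hammingDist_zero_right]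
      exact hB4norm b hb
    · rw [hbi]; exact (by decide : (0:ZMod 2) ≠ 1)
    · rw [hbj]; exact (by decide : (0:ZMod 2) ≠ 1)
  -- each a ∈ A' is adjacent to some b ∈ B4
  have hsfaij : ∀ a ∈ A', ∀ k ∈ sf a, k ∉ ({i, j} : Finset (Fin 8)) := by
    intro a ha k hk hkij
    obtain ⟨_, haA⟩ := Finset.mem_erase.mp ha
    obtain ⟨_, hai, haj⟩ := Finset.mem_filter.mp haA
    simp only [sf, Finset.mem_filter, Finset.mem_univ, true_and] at hk
    simp only [Finset.mem_insert, Finset.mem_singleton] at hkij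
    rcases hkij with rfl | rfl
    · exact hk hai
    · exact hk haj
  have hadjA : ∀ a ∈ A', ∃ b ∈ B4, adjC C i j b a := by
    intro a ha
    obtain ⟨hane, haA⟩ := Finset.mem_erase.mp ha
    obtain ⟨haC, hai, haj⟩ := Finset.mem_filter.mp haA
    -- W = complement of {i,j} ∪ supp a, card 2
    have hdisjia : Disjoint ({i, j} : Finset (Fin 8)) (sf a) := by
      rw [Finset.disjoint_right]
      exact fun k hk => hsfaij a ha k hk
    have hWcard : (Finset.univ \ (({i, j} : Finset (Fin 8)) ∪ sf a)).card = 2 := by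
      rw [Finset.card_sdiff_of_subset (Finset.subset_univ _), Finset.card_union_of_disjoint hdisjia,
        hijcard, ← norm_eq, hA'norm a ha]
      simp
    have hex : ∃ b ∈ B4, (sf b \ {i, j}) ∩ (Finset.univ \ (({i, j} : Finset (Fin 8)) ∪ sf a)) = ∅ := by
      by_contra hc
      push_neg at hc
      have hge : ∀ b ∈ B4, 1 ≤ ((sf b \ {i, j}) ∩ (Finset.univ \ (({i, j} : Finset (Fin 8)) ∪ sf a))).card := by
        intro b hb
        exact Finset.card_pos.mpr (hc b hb)
      have hdisj2 : ∀ b ∈ B4, ∀ b' ∈ B4, b ≠ b' →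
          Disjoint ((sf b \ {i, j}) ∩ (Finset.univ \ (({i, j} : Finset (Fin 8)) ∪ sf a)))
            ((sf b' \ {i, j}) ∩ (Finset.univ \ (({i, j} : Finset (Fin 8)) ∪ sf a))) := by
        intro b hb b' hb' hne
        obtain ⟨hbne, hbB⟩ := Finset.mem_erase.mp hb
        obtain ⟨hbne', hbB'⟩ := Finset.mem_erase.mp hb'
        rw [Finset.disjoint_left]
        intro k hk hk'
        have h1 := (Finset.mem_inter.mp hk).1
        have h2 := (Finset.mem_inter.mp hk').1
        have h1' := Finset.mem_sdiff.mp h1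
        have h2' := Finset.mem_sdiff.mp h2
        have : k ∈ sf b ∩ sf b' := Finset.mem_inter.mpr ⟨h1'.1, h2'.1⟩
        rw [hBint b hbB b' hbB' hne (hB4norm b hb) (hB4norm b' hb')] at this
        exact h1'.2 this
      have hsum : 3 ≤ (B4.biUnion (fun b => (sf b \ {i, j}) ∩ (Finset.univ \ (({i, j} : Finset (Fin 8)) ∪ sf a)))).card := by
        rw [Finset.card_biUnion hdisj2]
        calc 3 = ∑ _b ∈ B4, 1 := by rw [Finset.sum_const, hB4card, smul_eq_mul]
        _ ≤ _ := Finset.sum_le_sum hge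
      have hsub2 : B4.biUnion (fun b => (sf b \ {i, j}) ∩ (Finset.univ \ (({i, j} : Finset (Fin 8)) ∪ sf a)))
          ⊆ Finset.univ \ (({i, j} : Finset (Fin 8)) ∪ sf a) := by
        intro k hk
        obtain ⟨b, _, hkb⟩ := Finset.mem_biUnion.mp hk
        exact (Finset.mem_inter.mp hkb).2
      have := Finset.card_le_card hsub2
      rw [hWcard] at this
      linarith
    obtain ⟨b, hb, hbW⟩ := hex
    obtain ⟨hbne, hbB⟩ := Finset.mem_erase.mp hb
    obtain ⟨hbC, hbi, hbj⟩ := Finset.mem_filter.mp hbB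
    -- sf b \ {i,j} ⊆ sf a
    have hysub : sf b \ {i, j} ⊆ sf a := by
      intro k hk
      have hknotW : k ∉ Finset.univ \ (({i, j} : Finset (Fin 8)) ∪ sf a) := by
        intro hkW
        have : k ∈ (sf b \ {i, j}) ∩ (Finset.univ \ (({i, j} : Finset (Fin 8)) ∪ sf a)) :=
          Finset.mem_inter.mpr ⟨hk, hkW⟩
        rw [hbW] at this
        exact absurd this (Finset.notMem_empty k)
      have hkij := (Finset.mem_sdiff.mp hk).2
      have hku : k ∈ ({i, j} : Finset (Fin 8)) ∪ sf a := by
        by_contra hno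
        exact hknotW (Finset.mem_sdiff.mpr ⟨Finset.mem_univ k, hno⟩)
      rcases Finset.mem_union.mp hku with h | h
      · exact absurd h hkij
      · exact h
    -- intersection of supports is exactly sf b \ {i,j}
    have hint : sf b ∩ sf a = sf b \ {i, j} := by
      apply Finset.Subset.antisymm
      · intro k hk
        obtain ⟨hkb, hka⟩ := Finset.mem_inter.mp hk
        exact Finset.mem_sdiff.mpr ⟨hkb, hsfaij a ha k hka⟩
      · intro k hk
        exact Finset.mem_inter.mpr ⟨(Finset.mem_sdiff.mp hk).1, hysub hk⟩
    have hyc : (sf b \ {i, j}).card = 2 := by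
      rw [Finset.card_sdiff_of_subset (hijsub b hbi hbj), ← norm_eq, hB4norm b hb, hijcard]
    have hdc := dist_card b a
    rw [hint, hyc, hB4norm b hb, hA'norm a ha] at hdc
    refine ⟨b, hb, (hmem b).mp hbC, (hmem a).mp haC, by linarith, ?_, ?_⟩
    · rw [hbi, hai]; exact (by decide : (1:ZMod 2) ≠ 0)
    · rw [hbj, haj]; exact (by decide : (1:ZMod 2) ≠ 0)
  -- each a ∈ A' is adjacent to all-ones
  have hadjOne : ∀ a ∈ A', adjC C i j a oneV := by
    intro a ha
    obtain ⟨hane, haA⟩ := Finset.mem_erase.mp ha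
    obtain ⟨haC, hai, haj⟩ := Finset.mem_filter.mp haA
    have honeC := (Finset.mem_filter.mp honeB).1
    have hnormone : hammingNorm oneV = 8 := by decide
    have hdc := dist_card a oneV
    have hsfone : sf oneV = Finset.univ := by decide
    rw [hsfone, Finset.inter_univ, hnormone, hA'norm a ha, ← norm_eq, hA'norm a ha] at hdc
    refine ⟨(hmem a).mp haC, (hmem oneV).mp honeC, by linarith, ?_, ?_⟩
    · rw [hai]; exact (by decide : (0:ZMod 2) ≠ 1)
    · rw [haj]; exact (by decide : (0:ZMod 2) ≠ 1)
  -- reachability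
  have hreachB4 : ∀ b ∈ B4, Relation.ReflTransGen (adjC C i j) 0 b :=
    fun b hb => Relation.ReflTransGen.single (hadj0 b hb)
  have hreachA' : ∀ a ∈ A', Relation.ReflTransGen (adjC C i j) 0 a := by
    intro a ha
    obtain ⟨b, hb, hadj⟩ := hadjA a ha
    exact (hreachB4 b hb).tail hadj
  have hA'ne : A'.Nonempty := Finset.card_pos.mp (by rw [hA'card]; norm_num)
  have hreachOne : Relation.ReflTransGen (adjC C i j) 0 oneV := by
    obtain ⟨a, ha⟩ := hA'ne
    exact (hreachA' a ha).tail (hadjOne a ha)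
  -- invariant along the relation
  have hinv : ∀ c' : V, Relation.ReflTransGen (adjC C i j) 0 c' → c' i + c' j = 0 := by
    intro c' h
    induction h with
    | refl => exact (by decide : (0:ZMod 2) + 0 = 0)
    | tail hrt hstep ih =>
      rename_i x y
      obtain ⟨_, _, _, hi2, hj2⟩ := hstep
      have e1 : y i = x i + 1 := (by decide : ∀ u v : ZMod 2, u ≠ v → v = u + 1) _ _ hi2
      have e2 : y j = x j + 1 := (by decide : ∀ u v : ZMod 2, u ≠ v → v = u + 1) _ _ hj2
      rw [e1, e2]
      exact (by decide : ∀ u v : ZMod 2, u + v = 0 → (u+1)+(v+1) = 0) _ _ ih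
  have hclass : ∀ x : V, x i + x j = 0 → (x i = 0 ∧ x j = 0) ∨ (x i = 1 ∧ x j = 1) :=
    fun x => (by decide : ∀ u v : ZMod 2, u + v = 0 → (u = 0 ∧ v = 0) ∨ (u = 1 ∧ v = 1)) _ _
  -- the component of 0 is exactly A ∪ B
  have hseteq : {c' ∈ C | Relation.ReflTransGen (adjC C i j) 0 c'} = ↑(A ∪ B) := by
    ext x
    simp only [Set.mem_setOf_eq, Finset.coe_union, Set.mem_union, Finset.mem_coe]
    constructor
    · rintro ⟨hxC, hr⟩
      have hx : x ∈ CF := (hmem x).mpr hxC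
      rcases hclass x (hinv x hr) with ⟨h1, h2⟩ | ⟨h1, h2⟩
      · left; rw [hAdef]; exact Finset.mem_filter.mpr ⟨hx, h1, h2⟩
      · right; rw [hBdef]; exact Finset.mem_filter.mpr ⟨hx, h1, h2⟩
    · intro hx
      rcases hx with hxA | hxB
      · by_cases hx0 : x = 0
        · subst hx0; exact ⟨h0, Relation.ReflTransGen.refl⟩
        · have hx' : x ∈ A' := by rw [hA'def]; exact Finset.mem_erase.mpr ⟨hx0, hxA⟩
          exact ⟨(hmem x).mp (Finset.mem_filter.mp hxA).1, hreachA' x hx'⟩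
      · by_cases hx1 : x = oneV
        · subst hx1
          exact ⟨(hmem oneV).mp (Finset.mem_filter.mp hxB).1, hreachOne⟩
        · have hx' : x ∈ B4 := by rw [hB4def]; exact Finset.mem_erase.mpr ⟨hx1, hxB⟩
          exact ⟨(hmem x).mp (Finset.mem_filter.mp hxB).1, hreachB4 x hx'⟩
  rw [hseteq, Set.ncard_coe_finset]
  have hABdisj : Disjoint A B := by
    rw [Finset.disjoint_left]
    intro x hxA hxB
    have h1 := (Finset.mem_filter.mp hxA).2.1
    have h2 := (Finset.mem_filter.mp hxB).2.1
    rw [h1] at h2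
    exact (by decide : ¬ ((0:ZMod 2) = 1)) h2
  rw [Finset.card_union_of_disjoint hABdisj, hAcard, hBcard]

lemma addself (c : V) : c + c = 0 :=
  funext (fun k => (by decide : ∀ a : ZMod 2, a + a = 0) _)

lemma addcc (c a : V) : a + c + c = a := by
  rw [add_assoc, addself, add_zero]

lemma dist_add (x y c : V) : hammingDist (x + c) (y + c) = hammingDist x y := by
  rw [hammingDist_eq_hammingNorm, hammingDist_eq_hammingNorm]
  congr 1
  ring

lemma norm_add_eq_dist (x c : V) : hammingNorm (x + c) = hammingDist x c := by
  rw [hammingDist_eq_hammingNorm]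
  congr 1
  funext k
  show x k + c k = -x k + c k
  exact (by decide : ∀ a b : ZMod 2, a + b = -a + b) _ _

lemma norm_add_parity (x c : V) : hammingNorm (x + c) % 2 = (hammingNorm x + hammingNorm c) % 2 := by
  rw [norm_add_eq_dist]
  have := dist_card x c
  omega

theorem stmt_11 (C : Set (Fin 8 → ZMod 2))
    (hcard : C.ncard = 16)
    (hpar : ∀ c ∈ C, ∀ c' ∈ C, hammingNorm c % 2 = hammingNorm c' % 2)
    (hdist : ∀ c ∈ C, ∀ c' ∈ C, c ≠ c' → 4 ≤ hammingDist c c')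
    (i j : Fin 8) (hij : i ≠ j) :
    ∀ c ∈ C, {c' ∈ C | Relation.ReflTransGen (adjC C i j) c c'}.ncard = 8 := by
  intro c hc
  set D := (fun x : V => x + c) '' C with hD
  have hinj : Function.Injective (fun x : V => x + c) := add_left_injective c
  have h0D : (0:V) ∈ D := ⟨c, hc, addself c⟩
  have hcardD : D.ncard = 16 := by rw [hD, Set.ncard_image_of_injective _ hinj, hcard]
  have hparD : ∀ u ∈ D, ∀ v ∈ D, hammingNorm u % 2 = hammingNorm v % 2 := by
    rintro u ⟨x, hx, rfl⟩ v ⟨y, hy, rfl⟩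
    have h1 := norm_add_parity x c
    have h2 := norm_add_parity y c
    have h3 := hpar x hx y hy
    show hammingNorm (x + c) % 2 = hammingNorm (y + c) % 2
    omega
  have hdistD : ∀ u ∈ D, ∀ v ∈ D, u ≠ v → 4 ≤ hammingDist u v := by
    rintro u ⟨x, hx, rfl⟩ v ⟨y, hy, rfl⟩ hne
    rw [dist_add]
    exact hdist x hx y hy (fun h => hne (by rw [h]))
  have hadj_iff : ∀ a b : V, adjC C i j a b ↔ adjC D i j (a + c) (b + c) := by
    intro a b
    constructor
    · rintro ⟨haC, hbC, hd4, hi4, hj4⟩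
      refine ⟨⟨a, haC, rfl⟩, ⟨b, hbC, rfl⟩, by rw [dist_add]; exact hd4, ?_, ?_⟩
      · exact fun h => hi4 (add_left_injective (c i) h)
      · exact fun h => hj4 (add_left_injective (c j) h)
    · rintro ⟨haD, hbD, hd4, hi4, hj4⟩
      obtain ⟨x, hx, hxe⟩ := haD
      obtain ⟨y, hy, hye⟩ := hbD
      obtain rfl : x = a := hinj hxe
      obtain rfl : y = b := hinj hye
      rw [dist_add] at hd4
      refine ⟨hx, hy, hd4, ?_, ?_⟩
      · exact fun h => hi4 (by show x i + c i = y i + c i; rw [h])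
      · exact fun h => hj4 (by show x j + c j = y j + c j; rw [h])
  have hlift : ∀ x y : V, Relation.ReflTransGen (adjC C i j) x y →
      Relation.ReflTransGen (adjC D i j) (x + c) (y + c) :=
    fun x y h => Relation.ReflTransGen.lift (fun z => z + c)
      (fun a b hab => (hadj_iff a b).mp hab) _ _ h
  have hlift' : ∀ x y : V, Relation.ReflTransGen (adjC D i j) (x + c) (y + c) →
      Relation.ReflTransGen (adjC C i j) x y := by
    intro x y h
    have h2 := Relation.ReflTransGen.lift (fun z : V => z + c)
      (fun a b hab => (hadj_iff (a + c) (b + c)).mpr (by rw [addcc, addcc]; exact hab)) _ _ h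
    simp only [Function.onFun, addcc] at h2
    exact h2
  have hset : {c' ∈ D | Relation.ReflTransGen (adjC D i j) 0 c'}
      = (fun x : V => x + c) '' {c' ∈ C | Relation.ReflTransGen (adjC C i j) c c'} := by
    ext u
    simp only [Set.mem_setOf_eq, Set.mem_image]
    constructor
    · rintro ⟨hyD, hr⟩
      obtain ⟨x, hx, rfl⟩ := hyD
      refine ⟨x, ⟨hx, ?_⟩, rfl⟩
      rw [← addself c] at hr
      exact hlift' c x hr
    · rintro ⟨x, ⟨hx, hr⟩, rfl⟩
      refine ⟨⟨x, hx, rfl⟩, ?_⟩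
      have := hlift c x hr
      rwa [addself] at this
  have hmain := main0 D h0D hcardD hparD hdistD i j hij
  rw [hset, Set.ncard_image_of_injective _ hinj] at hmain
  exact hmain
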